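/- Let N ≡ 5 (mod 8) be square-free. The ideals I± = (4, √N ± 1) of ℤ[√N] are principal if and only if the equation x² − N y² = ±4 has a solution in odd integers x, y. -/
import Mathlib


-- backward direction core
lemma back_aux (N : ℕ) (m : ℤ) (hNm : (N:ℤ) = 8*m+5) (x y : ℤ)
    (e : ℤ) (he : e = 1 ∨ e = -1) (heq : x^2 - N*y^2 = e*4) (h4 : (4:ℤ) ∣ x - y) :
    (Ideal.span {4, Zsqrtd.sqrtd + 1} : Ideal (Zsqrtd N)).IsPrincipal ∧
    (Ideal.span {4, Zsqrtd.sqrtd - 1} : Ideal (Zsqrtd N)).IsPrincipal := by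
  obtain ⟨k, hk⟩ := h4
  set p : ℤ := k - (2*m+1)*y with hpdef
  have hp : x - N*y = 4*p := by rw [hpdef]; linear_combination hk - y*hNm
  have hee : e*e = 1 := by rcases he with rfl|rfl <;> norm_num
  have h1 : x*p + (N:ℤ)*y*k = e := by
    have h4' : 4*(x*p + (N:ℤ)*y*k) = 4*e := by linear_combination (-x)*hp + (-(N:ℤ)*y)*hk + heq
    linarith
  have h2 : x*k + y*p = e := by
    have h4' : 4*(x*k + y*p) = 4*e := by linear_combination (-x)*hk + (-y)*hp + heq
    linarith
  constructor
  · refine ⟨⟨(⟨x, y⟩ : Zsqrtd N), ?_⟩⟩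
    rw [Ideal.submodule_span_eq]
    apply le_antisymm
    · apply Ideal.span_le.mpr
      rintro z hz
      simp only [Set.mem_insert_iff, Set.mem_singleton_iff] at hz
      rcases hz with rfl | rfl
      · exact Ideal.mem_span_singleton'.mpr ⟨⟨e*x, -(e*y)⟩, by
          rw [Zsqrtd.ext_iff]
          constructor <;> simp [Zsqrtd.re_mul, Zsqrtd.im_mul]
          · linear_combination e*heq + 4*hee
          · ring⟩
      · exact Ideal.mem_span_singleton'.mpr ⟨⟨e*p, e*k⟩, by
          rw [Zsqrtd.ext_iff]
          constructor <;> simp [Zsqrtd.re_mul, Zsqrtd.im_mul]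
          · linear_combination e*h1 + hee
          · linear_combination e*h2 + hee⟩
    · rw [Ideal.span_le, Set.singleton_subset_iff]
      exact Ideal.mem_span_pair.mpr ⟨⟨k,0⟩, ⟨y,0⟩, by
        rw [Zsqrtd.ext_iff]
        constructor <;> simp [Zsqrtd.re_mul, Zsqrtd.im_mul] <;> linarith⟩
  · refine ⟨⟨(⟨x, -y⟩ : Zsqrtd N), ?_⟩⟩
    rw [Ideal.submodule_span_eq]
    apply le_antisymm
    · apply Ideal.span_le.mpr
      rintro z hz
      simp only [Set.mem_insert_iff, Set.mem_singleton_iff] at hz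
      rcases hz with rfl | rfl
      · exact Ideal.mem_span_singleton'.mpr ⟨⟨e*x, e*y⟩, by
          rw [Zsqrtd.ext_iff]
          constructor <;> simp [Zsqrtd.re_mul, Zsqrtd.im_mul]
          · linear_combination e*heq + 4*hee
          · ring⟩
      · exact Ideal.mem_span_singleton'.mpr ⟨⟨-(e*p), e*k⟩, by
          rw [Zsqrtd.ext_iff]
          constructor <;> simp [Zsqrtd.re_mul, Zsqrtd.im_mul]
          · linear_combination (-e)*h1 - hee
          · linear_combination e*h2 + hee⟩
    · rw [Ideal.span_le, Set.singleton_subset_iff]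
      exact Ideal.mem_span_pair.mpr ⟨⟨k,0⟩, ⟨-y,0⟩, by
        rw [Zsqrtd.ext_iff]
        constructor <;> simp [Zsqrtd.re_mul, Zsqrtd.im_mul] <;> linarith⟩


lemma fwd_aux (N : ℕ) (m : ℤ) (hNm : (N:ℤ) = 8*m+5)
    (h : (Ideal.span {4, Zsqrtd.sqrtd + 1} : Ideal (Zsqrtd N)).IsPrincipal) :
    ∃ x y : ℤ, Odd x ∧ Odd y ∧
      (x ^ 2 - (N : ℤ) * y ^ 2 = 4 ∨ x ^ 2 - (N : ℤ) * y ^ 2 = -4) := by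
  obtain ⟨g, hg⟩ := h.principal
  rw [Ideal.submodule_span_eq] at hg
  -- 4 = a * g
  have mem4 : (4 : Zsqrtd N) ∈ Ideal.span ({g} : Set (Zsqrtd N)) := by
    rw [← hg]; exact Ideal.subset_span (by simp)
  obtain ⟨a, ha⟩ := Ideal.mem_span_singleton'.mp mem4
  -- √N + 1 = b * g
  have memS : (Zsqrtd.sqrtd + 1 : Zsqrtd N) ∈ Ideal.span ({g} : Set (Zsqrtd N)) := by
    rw [← hg]; exact Ideal.subset_span (by simp)
  obtain ⟨b, hb⟩ := Ideal.mem_span_singleton'.mp memS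
  -- norm g divides 16 and N - 1
  have hn16 : g.norm ∣ 16 := ⟨a.norm, by
    have := congrArg Zsqrtd.norm ha
    rw [Zsqrtd.norm_mul] at this
    simpa [mul_comm, Zsqrtd.norm] using this.symm⟩
  have hnS : g.norm ∣ 1 - (N:ℤ) := ⟨b.norm, by
    have := congrArg Zsqrtd.norm hb
    rw [Zsqrtd.norm_mul] at this
    have hS : (Zsqrtd.sqrtd + 1 : Zsqrtd N).norm = 1 - (N:ℤ) := by
      simp [Zsqrtd.norm]
    rw [hS] at this
    rw [mul_comm]; exact this.symm⟩
  -- hence norm g ∣ 4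
  have hn8 : g.norm ∣ 8 := by
    have : (8:ℤ) = (-2)*(1 - (N:ℤ)) - m*16 := by linear_combination (-2)*hNm
    rw [this]; exact dvd_sub (hnS.mul_left _) (hn16.mul_left _)
  have hn4 : g.norm ∣ 4 := by
    have : (4:ℤ) = -(1 - (N:ℤ)) - m*8 := by linear_combination (-1)*hNm
    rw [this]; exact dvd_sub (hnS.neg_right) (hn8.mul_left _)
  -- norm g also a multiple of 4
  have memn : ((g.norm : ℤ) : Zsqrtd N) ∈ Ideal.span ({(4:Zsqrtd N), Zsqrtd.sqrtd + 1} : Set (Zsqrtd N)) := by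
    rw [hg]
    exact Ideal.mem_span_singleton'.mpr ⟨star g, by rw [mul_comm, ← Zsqrtd.norm_eq_mul_conj]⟩
  obtain ⟨u, v, huv⟩ := Ideal.mem_span_pair.mp memn
  have hre : u.re*4 + (v.re + (N:ℤ)*v.im) = g.norm := by
    have := congrArg Zsqrtd.re huv
    simpa [Zsqrtd.re_mul] using this
  have him : u.im*4 + (v.re + v.im) = 0 := by
    have := congrArg Zsqrtd.im huv
    simpa [Zsqrtd.im_mul] using this
  have h4n : (4:ℤ) ∣ g.norm := ⟨u.re - u.im + v.im + 2*(m*v.im), by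
    linear_combination him - hre + v.im*hNm⟩
  -- so norm g = ±4
  have habs : g.norm = 4 ∨ g.norm = -4 := by
    have h1 := Int.natAbs_dvd_natAbs.mpr hn4
    have h2 := Int.natAbs_dvd_natAbs.mpr h4n
    have := Nat.dvd_antisymm h1 h2
    omega
  -- parity: g.re and g.im have the same parity
  have hnormdef : g.norm = g.re*g.re - (N:ℤ)*(g.im*g.im) := by
    simp [Zsqrtd.norm]; ring
  have hNodd : ¬ Even ((N:ℤ)) := by simp [Int.even_iff]; omega
  have hevnorm : Even g.norm := by rcases habs with h|h <;> rw [h] <;> decide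
  have hpar : (Even g.re ↔ Even g.im) := by
    rw [hnormdef, Int.even_sub] at hevnorm
    simpa [Int.even_mul, hNodd, or_self] using hevnorm
  -- both even is impossible
  have hodd : Odd g.re ∧ Odd g.im := by
    rcases Int.even_or_odd g.re with he | ho
    · exfalso
      have heim := hpar.mp he
      have h1 : b.re * g.re + (N:ℤ)*b.im*g.im = 1 := by
        have := congrArg Zsqrtd.re hb
        simpa [Zsqrtd.re_mul] using this
      have : Even ((1:ℤ)) := by
        rw [← h1]
        exact (he.mul_left _).add (heim.mul_left _)
      norm_num at this
    · exact ⟨ho, by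
        rcases Int.even_or_odd g.im with he2 | ho2
        · exact absurd (hpar.mpr he2) (Int.not_even_iff_odd.mpr ho)
        · exact ho2⟩
  refine ⟨g.re, g.im, hodd.1, hodd.2, ?_⟩
  rcases habs with h|h
  · left; rw [← h, hnormdef]; ring
  · right; rw [← h, hnormdef]; ring

/-- For squarefree `N ≡ 5 (mod 8)`, the ideals `I± = (4, √N ± 1)` of `ℤ[√N]` (modelled as
`Zsqrtd N`) are principal if and only if `x² − Ny² = ±4` has a solution in odd integers. -/
theorem ideals_principal_iff_odd_solution (N : ℕ) (hsf : Squarefree N) (hN : N % 8 = 5) :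
    ((Ideal.span {4, Zsqrtd.sqrtd + 1} : Ideal (Zsqrtd N)).IsPrincipal ∧
        (Ideal.span {4, Zsqrtd.sqrtd - 1} : Ideal (Zsqrtd N)).IsPrincipal) ↔
      ∃ x y : ℤ, Odd x ∧ Odd y ∧
        (x ^ 2 - (N : ℤ) * y ^ 2 = 4 ∨ x ^ 2 - (N : ℤ) * y ^ 2 = -4) := by
  have hNm : (N:ℤ) = 8*((N/8 : ℕ) : ℤ) + 5 := by omega
  constructor
  · rintro ⟨h1, -⟩
    exact fwd_aux N _ hNm h1
  · rintro ⟨x, y, hx, hy, heq⟩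
    obtain ⟨e, he, heq'⟩ : ∃ e : ℤ, (e = 1 ∨ e = -1) ∧ x^2 - (N:ℤ)*y^2 = e*4 := by
      rcases heq with h|h
      · exact ⟨1, Or.inl rfl, by linarith⟩
      · exact ⟨-1, Or.inr rfl, by linarith⟩
    have hxy : (4:ℤ) ∣ x - y ∨ (4:ℤ) ∣ x + y := by
      rw [Int.odd_iff] at hx hy
      omega
    rcases hxy with h4 | h4
    · exact back_aux N _ hNm x y e he heq' h4
    · have heq2 : x^2 - (N:ℤ)*(-y)^2 = e*4 := by linear_combination heq'
      have h42 : (4:ℤ) ∣ x - (-y) := by omega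
      exact back_aux N _ hNm x (-y) e he heq2 h42
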